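/- Characterization of extreme points of discrete N-representable 2-marginals: the set of extreme points of ℛ₂ (the set of ℓ×ℓ matrices arising as 2-marginals of symmetric N-point probability tensors on a state space of size ℓ) equals {(N/(N−1))λλᵀ − (1/(N−1))diag(λ) : λ ∈ ℝ^ℓ, λ ≥ 0, 𝟙ᵀλ = 1, each λ_i ∈ {0, 1/N, 2/N,…}}; in particular ℛ₂ is the convex hull of these matrices. -/

import Mathlib

/-- The set `ℛ₂` of discrete `N`-representable 2-marginals (with `N = M + 2`
particles and state space of size `ℓ`): all `ℓ×ℓ` matrices arising as 2-marginals
`Γ_{i₁i₂} = ∑_{i₃,…,i_N} γ_{i₁i₂i₃…i_N}` of symmetric probability tensors `γ`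
(nonnegative entries summing to `1`, invariant under index permutations). -/
def repr2Marginals (ℓ M : ℕ) : Set (Matrix (Fin ℓ) (Fin ℓ) ℝ) :=
  {Γ | ∃ γ : (Fin (M + 2) → Fin ℓ) → ℝ,
    (∀ idx, 0 ≤ γ idx) ∧ (∑ idx : Fin (M + 2) → Fin ℓ, γ idx = 1) ∧
    (∀ (σ : Equiv.Perm (Fin (M + 2))) (idx : Fin (M + 2) → Fin ℓ), γ (idx ∘ σ) = γ idx) ∧
    ∀ i j : Fin ℓ, Γ i j
      = ∑ idx : Fin (M + 2) → Fin ℓ, if idx 0 = i ∧ idx 1 = j then γ idx else 0}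

/-- The conjectured extreme points: matrices `(N/(N−1))λλᵀ − (1/(N−1))diag(λ)` with
`λ ≥ 0`, `𝟙ᵀλ = 1`, and each `λ_i ∈ {0, 1/N, 2/N, …}` (here `N = M + 2`). -/
def sparseExtremals (ℓ M : ℕ) : Set (Matrix (Fin ℓ) (Fin ℓ) ℝ) :=
  {Γ | ∃ lam : Fin ℓ → ℝ, (∀ i, 0 ≤ lam i) ∧ (∑ i, lam i = 1) ∧
    (∀ i, ∃ k : ℕ, lam i = (k : ℝ) / (M + 2)) ∧
    Γ = (((M : ℝ) + 2) / ((M : ℝ) + 1)) • Matrix.of (fun i j => lam i * lam j)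
        - (((M : ℝ) + 1))⁻¹ • Matrix.diagonal lam}

/-- count of occurrences of `i` in `idx` -/
def cnt (idx : Fin (M + 2) → Fin ℓ) (i : Fin ℓ) : ℕ :=
  (Finset.univ.filter (fun a => idx a = i)).card

noncomputable def lamOf (idx : Fin (M + 2) → Fin ℓ) (i : Fin ℓ) : ℝ :=
  (cnt idx i : ℝ) / (M + 2)

noncomputable def Emat (ℓ M : ℕ) (lam : Fin ℓ → ℝ) : Matrix (Fin ℓ) (Fin ℓ) ℝ :=
  (((M : ℝ) + 2) / ((M : ℝ) + 1)) • Matrix.of (fun i j => lam i * lam j)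
    - (((M : ℝ) + 1))⁻¹ • Matrix.diagonal lam

lemma Emat_apply (lam : Fin ℓ → ℝ) (i j : Fin ℓ) :
    Emat ℓ M lam i j = ((M : ℝ) + 2) / ((M : ℝ) + 1) * (lam i * lam j)
      - (if i = j then ((M : ℝ) + 1)⁻¹ * lam i else 0) := by
  simp only [Emat, Matrix.sub_apply, Matrix.smul_apply, Matrix.of_apply,
    Matrix.diagonal_apply, smul_eq_mul]
  by_cases h : i = j <;> simp [h, mul_comm]

lemma cnt_cast (idx : Fin (M + 2) → Fin ℓ) (i : Fin ℓ) :
    (cnt idx i : ℝ) = ∑ a, if idx a = i then (1 : ℝ) else 0 := by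
  rw [Finset.sum_boole, cnt]

lemma sum_cnt (idx : Fin (M + 2) → Fin ℓ) : ∑ i, (cnt idx i : ℝ) = (M : ℝ) + 2 := by
  simp_rw [cnt_cast]
  rw [Finset.sum_comm]
  simp [Finset.sum_ite_eq]

lemma sum_lamOf (idx : Fin (M + 2) → Fin ℓ) : ∑ i, lamOf idx i = 1 := by
  simp_rw [lamOf, ← Finset.sum_div]
  rw [sum_cnt]
  have : (M : ℝ) + 2 ≠ 0 := by positivity
  field_simp

/-- collapse a double sum of indicators -/
lemma collapse {α β : Type*} [Fintype α] [Fintype β] [DecidableEq α] [DecidableEq β]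
    (g : α → β → ℝ) (x : α) (y : β) :
    (∑ a, ∑ b, if x = a ∧ y = b then g a b else 0) = g x y := by
  simp [ite_and, Finset.sum_ite_eq]

/-- number (as a real) of permutations sending `0 ↦ a`, `1 ↦ b` -/
noncomputable def S (M : ℕ) (a b : Fin (M + 2)) : ℝ :=
  ∑ σ : Equiv.Perm (Fin (M + 2)), if σ 0 = a ∧ σ 1 = b then 1 else 0

lemma finZeroNeOne : (0 : Fin (M + 2)) ≠ 1 := by
  simp [Fin.ext_iff]

lemma S_diag (a : Fin (M + 2)) : S M a a = 0 := by
  apply Finset.sum_eq_zero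
  intro σ _
  rw [if_neg]
  rintro ⟨h1, h2⟩
  exact finZeroNeOne (σ.injective (h1.trans h2.symm))

lemma S_const {a b : Fin (M + 2)} (hab : a ≠ b) : S M a b = S M 0 1 := by
  obtain ⟨τ, hτ0, hτ1⟩ : ∃ τ : Equiv.Perm (Fin (M + 2)), τ 0 = a ∧ τ 1 = b := by
    set τ₁ := Equiv.swap (0 : Fin (M + 2)) a with hτ₁
    have h1 : τ₁ 0 = a := Equiv.swap_apply_left _ _
    set b₁ := τ₁ 1 with hb₁
    have hab₁ : a ≠ b₁ := by
      rw [← h1, hb₁]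
      exact fun h => finZeroNeOne (τ₁.injective h)
    refine ⟨(Equiv.swap b₁ b) * τ₁, ?_, ?_⟩
    · simp only [Equiv.Perm.mul_apply, h1]
      exact Equiv.swap_apply_of_ne_of_ne hab₁ hab
    · simp only [Equiv.Perm.mul_apply, ← hb₁]
      exact Equiv.swap_apply_left _ _
  rw [S, ← Equiv.sum_comp (Equiv.mulLeft τ)
    (fun σ => if σ 0 = a ∧ σ 1 = b then (1:ℝ) else 0)]
  apply Finset.sum_congr rfl
  intro σ _
  simp only [Equiv.coe_mulLeft, Equiv.Perm.mul_apply]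
  congr 1
  rw [← hτ0, ← hτ1]
  simp only [eq_iff_iff]
  constructor
  · rintro ⟨h1, h2⟩; exact ⟨τ.injective h1, τ.injective h2⟩
  · rintro ⟨h1, h2⟩; exact ⟨congrArg τ h1, congrArg τ h2⟩

/-- the unnormalized marginal count -/
noncomputable def T (idx : Fin (M + 2) → Fin ℓ) (i j : Fin ℓ) : ℝ :=
  ∑ σ : Equiv.Perm (Fin (M + 2)), if idx (σ 0) = i ∧ idx (σ 1) = j then 1 else 0

lemma T_eq (idx : Fin (M + 2) → Fin ℓ) (i j : Fin ℓ) :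
    T idx i j = S M 0 1 *
      ((cnt idx i : ℝ) * (cnt idx j : ℝ) - if i = j then (cnt idx i : ℝ) else 0) := by
  classical
  have step1 : T idx i j = ∑ a : Fin (M + 2), ∑ b : Fin (M + 2),
      (if idx a = i ∧ idx b = j then (1:ℝ) else 0) * S M a b := by
    rw [T]
    have : ∀ σ : Equiv.Perm (Fin (M + 2)),
        (if idx (σ 0) = i ∧ idx (σ 1) = j then (1:ℝ) else 0)
        = ∑ a : Fin (M + 2), ∑ b : Fin (M + 2),
            if σ 0 = a ∧ σ 1 = b then (if idx a = i ∧ idx b = j then (1:ℝ) else 0) else 0 := by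
      intro σ
      rw [collapse (fun a b => if idx a = i ∧ idx b = j then (1:ℝ) else 0) (σ 0) (σ 1)]
    simp_rw [this]
    rw [Finset.sum_comm]
    apply Finset.sum_congr rfl
    intro a _
    rw [Finset.sum_comm]
    apply Finset.sum_congr rfl
    intro b _
    rw [S, Finset.mul_sum]
    apply Finset.sum_congr rfl
    intro σ _
    by_cases h : σ 0 = a ∧ σ 1 = b <;> by_cases h' : idx a = i ∧ idx b = j <;>
      simp [h, h']
  have key : ∀ a b : Fin (M + 2),
      (if idx a = i ∧ idx b = j then (1:ℝ) else 0) * S M a b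
      = (if idx a = i ∧ idx b = j then (1:ℝ) else 0) * S M 0 1
        - (if a = b then (if idx a = i ∧ idx b = j then (1:ℝ) else 0) * S M 0 1 else 0) := by
    intro a b
    by_cases hab : a = b
    · subst hab; simp [S_diag]
    · simp [hab, S_const hab]
  rw [step1]
  simp_rw [key, Finset.sum_sub_distrib]
  have split : ∀ a b : Fin (M + 2), (if idx a = i ∧ idx b = j then (1:ℝ) else 0)
      = (if idx a = i then (1:ℝ) else 0) * (if idx b = j then (1:ℝ) else 0) := by
    intro a b
    by_cases h1 : idx a = i <;> by_cases h2 : idx b = j <;> simp [h1, h2]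
  have e1 : ∑ a : Fin (M + 2), ∑ b : Fin (M + 2),
      (if idx a = i ∧ idx b = j then (1:ℝ) else 0) * S M 0 1
      = (cnt idx i : ℝ) * (cnt idx j : ℝ) * S M 0 1 := by
    have inner1 : ∀ a : Fin (M + 2), ∑ b : Fin (M + 2),
        ((if idx a = i then (1:ℝ) else 0) * (if idx b = j then (1:ℝ) else 0)) * S M 0 1
        = (if idx a = i then (1:ℝ) else 0) * ((cnt idx j : ℝ) * S M 0 1) := by
      intro a
      rw [← Finset.sum_mul, ← Finset.mul_sum, ← cnt_cast]
      ring
    simp_rw [split, inner1]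
    rw [← Finset.sum_mul, ← cnt_cast]
    ring
  have e2 : ∑ a : Fin (M + 2), ∑ b : Fin (M + 2),
      (if a = b then (if idx a = i ∧ idx b = j then (1:ℝ) else 0) * S M 0 1 else 0)
      = (if i = j then (cnt idx i : ℝ) else 0) * S M 0 1 := by
    have inner : ∀ a : Fin (M + 2), ∑ b : Fin (M + 2),
        (if a = b then (if idx a = i ∧ idx b = j then (1:ℝ) else 0) * S M 0 1 else 0)
        = (if idx a = i ∧ idx a = j then (1:ℝ) else 0) * S M 0 1 := by
      intro a
      rw [Finset.sum_ite_eq]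
      simp
    simp_rw [inner]
    by_cases hij : i = j
    · subst hij
      simp only [and_self, eq_self_iff_true, if_true]
      rw [← Finset.sum_mul, ← cnt_cast]
    · rw [if_neg hij, Finset.sum_eq_zero, zero_mul]
      intro a _
      rw [if_neg, zero_mul]
      rintro ⟨h1, h2⟩
      exact hij (h1.symm.trans h2)
  rw [e1, e2]
  ring


lemma sum_T (idx : Fin (M + 2) → Fin ℓ) :
    ∑ i, ∑ j, T idx i j = (Nat.factorial (M + 2) : ℝ) := by
  have hcoll : ∀ σ : Equiv.Perm (Fin (M + 2)), ∑ i, ∑ j : Fin ℓ,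
      (if idx (σ 0) = i ∧ idx (σ 1) = j then (1:ℝ) else 0) = 1 := by
    intro σ
    rw [collapse (fun _ _ => (1:ℝ)) (idx (σ 0)) (idx (σ 1))]
  simp_rw [T]
  calc ∑ i : Fin ℓ, ∑ j : Fin ℓ, ∑ σ : Equiv.Perm (Fin (M + 2)),
        (if idx (σ 0) = i ∧ idx (σ 1) = j then (1:ℝ) else 0)
      = ∑ i : Fin ℓ, ∑ σ : Equiv.Perm (Fin (M + 2)), ∑ j : Fin ℓ,
        (if idx (σ 0) = i ∧ idx (σ 1) = j then (1:ℝ) else 0) :=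
        Finset.sum_congr rfl (fun i _ => Finset.sum_comm)
    _ = ∑ σ : Equiv.Perm (Fin (M + 2)), ∑ i : Fin ℓ, ∑ j : Fin ℓ,
        (if idx (σ 0) = i ∧ idx (σ 1) = j then (1:ℝ) else 0) := Finset.sum_comm
    _ = ∑ σ : Equiv.Perm (Fin (M + 2)), (1:ℝ) :=
        Finset.sum_congr rfl (fun σ _ => hcoll σ)
    _ = (Nat.factorial (M + 2) : ℝ) := by
        rw [Finset.sum_const, Finset.card_univ, Fintype.card_perm, Fintype.card_fin]
        simp

lemma S01_eq (idx : Fin (M + 2) → Fin ℓ) :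
    S M 0 1 * (((M : ℝ) + 2) * ((M : ℝ) + 1)) = (Nat.factorial (M + 2) : ℝ) := by
  have h := sum_T idx
  simp_rw [T_eq, ← Finset.mul_sum] at h
  have ha : ∑ i, ∑ j, ((cnt idx i : ℝ) * (cnt idx j : ℝ)) = ((M:ℝ)+2) * ((M:ℝ)+2) := by
    simp_rw [← Finset.mul_sum]
    rw [← Finset.sum_mul, sum_cnt]
  have hb : ∑ i, ∑ j, (if i = j then (cnt idx i : ℝ) else 0) = (M:ℝ)+2 := by
    simp_rw [Finset.sum_ite_eq]
    simp [sum_cnt]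
  rw [← h]
  have : ∑ i : Fin ℓ, ∑ j : Fin ℓ,
      ((cnt idx i : ℝ) * (cnt idx j : ℝ) - if i = j then (cnt idx i : ℝ) else 0)
      = (((M:ℝ)+2) * ((M:ℝ)+2)) - ((M:ℝ)+2) := by
    simp_rw [Finset.sum_sub_distrib]
    rw [ha, hb]
  rw [this]
  ring

noncomputable def symDirac (idx jdx : Fin (M + 2) → Fin ℓ) : ℝ :=
  (Nat.factorial (M + 2) : ℝ)⁻¹ *
    ∑ σ : Equiv.Perm (Fin (M + 2)), if idx ∘ σ = jdx then 1 else 0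

lemma fact_ne : (Nat.factorial (M + 2) : ℝ) ≠ 0 := by
  exact_mod_cast Nat.factorial_ne_zero _

lemma symDirac_nonneg (idx jdx : Fin (M + 2) → Fin ℓ) : 0 ≤ symDirac idx jdx := by
  apply mul_nonneg
  · positivity
  · apply Finset.sum_nonneg; intro σ _; positivity

lemma symDirac_sum (idx : Fin (M + 2) → Fin ℓ) : ∑ jdx, symDirac idx jdx = 1 := by
  unfold symDirac
  rw [← Finset.mul_sum, Finset.sum_comm]
  have : ∀ σ : Equiv.Perm (Fin (M + 2)),
      ∑ jdx : Fin (M + 2) → Fin ℓ, (if idx ∘ σ = jdx then (1:ℝ) else 0) = 1 := by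
    intro σ
    rw [Finset.sum_ite_eq]
    simp
  simp_rw [this]
  rw [Finset.sum_const, Finset.card_univ, Fintype.card_perm, Fintype.card_fin]
  simp only [nsmul_eq_mul, mul_one]
  exact inv_mul_cancel₀ fact_ne

lemma symDirac_symm (idx : Fin (M + 2) → Fin ℓ) (τ : Equiv.Perm (Fin (M + 2)))
    (jdx : Fin (M + 2) → Fin ℓ) : symDirac idx (jdx ∘ τ) = symDirac idx jdx := by
  unfold symDirac
  congr 1
  rw [← Equiv.sum_comp (Equiv.mulRight τ)
    (fun σ => if idx ∘ σ = jdx ∘ τ then (1:ℝ) else 0)]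
  apply Finset.sum_congr rfl
  intro σ _
  simp only [Equiv.coe_mulRight]
  congr 1
  simp only [eq_iff_iff]
  constructor
  · intro h
    funext x
    have := congrFun h (τ.symm x)
    simpa [Function.comp, Equiv.Perm.mul_apply, Equiv.apply_symm_apply] using this
  · intro h
    funext x
    have := congrFun h (τ x)
    simpa [Function.comp, Equiv.Perm.mul_apply] using this

/-- the 2-marginal of the symmetrized Dirac equals the sparse extremal matrix -/
lemma symDirac_marginal (idx : Fin (M + 2) → Fin ℓ) (i j : Fin ℓ) :
    (∑ jdx : Fin (M + 2) → Fin ℓ, if jdx 0 = i ∧ jdx 1 = j then symDirac idx jdx else 0)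
      = Emat ℓ M (lamOf idx) i j := by
  have step1 : (∑ jdx : Fin (M + 2) → Fin ℓ, if jdx 0 = i ∧ jdx 1 = j then symDirac idx jdx else 0)
      = (Nat.factorial (M + 2) : ℝ)⁻¹ * T idx i j := by
    have pull : ∀ jdx : Fin (M + 2) → Fin ℓ,
        (if jdx 0 = i ∧ jdx 1 = j then symDirac idx jdx else 0)
        = (Nat.factorial (M + 2) : ℝ)⁻¹ *
          (∑ σ : Equiv.Perm (Fin (M + 2)),
            if idx ∘ ⇑σ = jdx then (if jdx 0 = i ∧ jdx 1 = j then (1:ℝ) else 0) else 0) := by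
      intro jdx
      by_cases h : jdx 0 = i ∧ jdx 1 = j
      · rw [if_pos h, symDirac]
        congr 1
        apply Finset.sum_congr rfl
        intro σ _
        rw [if_pos h]
      · rw [if_neg h]
        have hz : ∀ σ : Equiv.Perm (Fin (M + 2)),
            (if idx ∘ ⇑σ = jdx then (if jdx 0 = i ∧ jdx 1 = j then (1:ℝ) else 0) else 0) = 0 := by
          intro σ
          rw [if_neg h]
          simp
        simp_rw [hz]
        simp
    simp_rw [pull]
    rw [← Finset.mul_sum]
    congr 1
    rw [Finset.sum_comm]
    unfold T
    apply Finset.sum_congr rfl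
    intro σ _
    rw [Finset.sum_ite_eq]
    simp [Function.comp]
  rw [step1, T_eq, Emat_apply]
  have hM1 : (M : ℝ) + 1 ≠ 0 := by positivity
  have hM2 : (M : ℝ) + 2 ≠ 0 := by positivity
  have hS : S M 0 1 = (Nat.factorial (M + 2) : ℝ) / (((M : ℝ) + 2) * ((M : ℝ) + 1)) := by
    rw [eq_div_iff (by positivity)]
    exact S01_eq idx
  rw [hS, lamOf, lamOf]
  by_cases hij : i = j
  · subst hij
    simp only [if_pos rfl, if_true]
    field_simp
  · simp only [if_neg hij]
    field_simp
    ring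

lemma lamOf_nonneg (idx : Fin (M + 2) → Fin ℓ) (i : Fin ℓ) : 0 ≤ lamOf idx i := by
  unfold lamOf; positivity

lemma Emat_lamOf_mem (idx : Fin (M + 2) → Fin ℓ) :
    Emat ℓ M (lamOf idx) ∈ repr2Marginals ℓ M := by
  refine ⟨symDirac idx, symDirac_nonneg idx, symDirac_sum idx,
    fun σ jdx => symDirac_symm idx σ jdx, fun i j => (symDirac_marginal idx i j).symm⟩

lemma Emat_lamOf_mem_sparse (idx : Fin (M + 2) → Fin ℓ) :
    Emat ℓ M (lamOf idx) ∈ sparseExtremals ℓ M := by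
  refine ⟨lamOf idx, lamOf_nonneg idx, sum_lamOf idx, fun i => ⟨cnt idx i, rfl⟩, rfl⟩

lemma Emat_eq_T (idx : Fin (M + 2) → Fin ℓ) (i j : Fin ℓ) :
    Emat ℓ M (lamOf idx) i j = (Nat.factorial (M + 2) : ℝ)⁻¹ * T idx i j := by
  rw [T_eq, Emat_apply]
  have hS : S M 0 1 = (Nat.factorial (M + 2) : ℝ) / (((M : ℝ) + 2) * ((M : ℝ) + 1)) := by
    rw [eq_div_iff (by positivity)]
    exact S01_eq idx
  have hf := fact_ne (M := M)
  rw [hS, lamOf, lamOf]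
  by_cases hij : i = j
  · subst hij; simp only [if_pos rfl, if_true]; field_simp
  · simp only [if_neg hij]; field_simp; ring

/-- decomposition of any marginal as a weighted sum of sparse extremals -/
lemma decomp {Γ : Matrix (Fin ℓ) (Fin ℓ) ℝ} {γ : (Fin (M + 2) → Fin ℓ) → ℝ}
    (hsym : ∀ (σ : Equiv.Perm (Fin (M + 2))) (idx : Fin (M + 2) → Fin ℓ), γ (idx ∘ σ) = γ idx)
    (hΓ : ∀ i j : Fin ℓ, Γ i j
      = ∑ idx : Fin (M + 2) → Fin ℓ, if idx 0 = i ∧ idx 1 = j then γ idx else 0)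
    (i j : Fin ℓ) :
    Γ i j = ∑ idx : Fin (M + 2) → Fin ℓ, γ idx * Emat ℓ M (lamOf idx) i j := by
  have h2 : ∀ σ : Equiv.Perm (Fin (M + 2)),
      (∑ idx : Fin (M + 2) → Fin ℓ,
        γ idx * if idx (σ 0) = i ∧ idx (σ 1) = j then (1:ℝ) else 0) = Γ i j := by
    intro σ
    have e : ∀ x : Fin (M + 2) → Fin ℓ,
        γ (x ∘ ⇑σ⁻¹) * (if (x ∘ ⇑σ⁻¹) (σ 0) = i ∧ (x ∘ ⇑σ⁻¹) (σ 1) = j then (1:ℝ) else 0)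
        = γ x * (if x 0 = i ∧ x 1 = j then (1:ℝ) else 0) := by
      intro x
      rw [hsym σ⁻¹ x]
      congr 2
      simp [Function.comp]
    calc (∑ idx : Fin (M + 2) → Fin ℓ,
          γ idx * if idx (σ 0) = i ∧ idx (σ 1) = j then (1:ℝ) else 0)
        = ∑ idx : Fin (M + 2) → Fin ℓ,
            γ (idx ∘ ⇑σ⁻¹) * if (idx ∘ ⇑σ⁻¹) (σ 0) = i ∧ (idx ∘ ⇑σ⁻¹) (σ 1) = j then (1:ℝ) else 0 :=
          by
          rw [← Equiv.sum_comp (Equiv.arrowCongr (σ : Fin (M+2) ≃ Fin (M+2)) (Equiv.refl (Fin ℓ)))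
            (fun x => γ x * if x (σ 0) = i ∧ x (σ 1) = j then (1:ℝ) else 0)]
          exact Finset.sum_congr rfl (fun x _ => rfl)
      _ = ∑ idx : Fin (M + 2) → Fin ℓ, γ idx * (if idx 0 = i ∧ idx 1 = j then (1:ℝ) else 0) :=
          Finset.sum_congr rfl (fun x _ => e x)
      _ = Γ i j := by
          rw [hΓ i j]
          apply Finset.sum_congr rfl
          intro idx _
          by_cases h : idx 0 = i ∧ idx 1 = j <;> simp [h]
  calc Γ i j
      = (Nat.factorial (M + 2) : ℝ)⁻¹ * ∑ _σ : Equiv.Perm (Fin (M + 2)), Γ i j := by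
        rw [Finset.sum_const, Finset.card_univ, Fintype.card_perm, Fintype.card_fin,
          nsmul_eq_mul, ← mul_assoc, inv_mul_cancel₀ fact_ne, one_mul]
    _ = (Nat.factorial (M + 2) : ℝ)⁻¹ * ∑ σ : Equiv.Perm (Fin (M + 2)),
          ∑ idx : Fin (M + 2) → Fin ℓ,
            γ idx * (if idx (σ 0) = i ∧ idx (σ 1) = j then (1:ℝ) else 0) := by
        congr 1
        exact Finset.sum_congr rfl (fun σ _ => (h2 σ).symm)
    _ = (Nat.factorial (M + 2) : ℝ)⁻¹ * ∑ idx : Fin (M + 2) → Fin ℓ,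
          ∑ σ : Equiv.Perm (Fin (M + 2)),
            γ idx * (if idx (σ 0) = i ∧ idx (σ 1) = j then (1:ℝ) else 0) := by
        rw [Finset.sum_comm]
    _ = ∑ idx : Fin (M + 2) → Fin ℓ,
          γ idx * ((Nat.factorial (M + 2) : ℝ)⁻¹ * T idx i j) := by
        rw [Finset.mul_sum]
        apply Finset.sum_congr rfl
        intro idx _
        rw [T]
        simp only [Finset.mul_sum]
        exact Finset.sum_congr rfl (fun σ _ => by ring)
    _ = ∑ idx : Fin (M + 2) → Fin ℓ, γ idx * Emat ℓ M (lamOf idx) i j :=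
        Finset.sum_congr rfl (fun idx _ => by rw [Emat_eq_T])

lemma rowsum_Emat {lam : Fin ℓ → ℝ} (h1 : ∑ i, lam i = 1) (i : Fin ℓ) :
    ∑ j, Emat ℓ M lam i j = lam i := by
  simp_rw [Emat_apply]
  rw [Finset.sum_sub_distrib]
  have e1 : ∑ j, ((M : ℝ) + 2) / ((M : ℝ) + 1) * (lam i * lam j)
      = ((M : ℝ) + 2) / ((M : ℝ) + 1) * lam i := by
    rw [← Finset.mul_sum, ← Finset.mul_sum, h1, mul_one]
  have e2 : ∑ j, (if i = j then ((M : ℝ) + 1)⁻¹ * lam i else 0) = ((M : ℝ) + 1)⁻¹ * lam i := by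
    rw [Finset.sum_ite_eq]
    simp
  rw [e1, e2]
  have hM1 : (M : ℝ) + 1 ≠ 0 := by positivity
  field_simp
  ring

lemma trace_Emat {lam : Fin ℓ → ℝ} (h1 : ∑ i, lam i = 1) :
    ∑ i, Emat ℓ M lam i i = (((M : ℝ) + 2) * ∑ i, (lam i)^2 - 1) / ((M : ℝ) + 1) := by
  simp_rw [Emat_apply, if_true]
  rw [Finset.sum_sub_distrib]
  have e1 : ∑ i, ((M : ℝ) + 2) / ((M : ℝ) + 1) * (lam i * lam i)
      = ((M : ℝ) + 2) / ((M : ℝ) + 1) * ∑ i, (lam i)^2 := by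
    rw [Finset.mul_sum]
    exact Finset.sum_congr rfl (fun i _ => by ring)
  have e2 : ∑ i, ((M : ℝ) + 1)⁻¹ * lam i = ((M : ℝ) + 1)⁻¹ := by
    rw [← Finset.mul_sum, h1, mul_one]
  rw [e1, e2]
  have hM1 : (M : ℝ) + 1 ≠ 0 := by positivity
  field_simp

/-- Jensen-type identity for weighted sums of squares -/
lemma jensen_single {ι : Type*} [Fintype ι] (c : ι → ℝ) (x : ι → ℝ) (hc : ∑ m, c m = 1) :
    ∑ m, c m * (x m - ∑ m', c m' * x m')^2
      = ∑ m, c m * (x m)^2 - (∑ m, c m * x m)^2 := by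
  set s := ∑ m', c m' * x m' with hs
  have expand : ∀ m, c m * (x m - s)^2
      = c m * (x m)^2 - (2 * s) * (c m * x m) + s^2 * c m := by
    intro m; ring
  simp_rw [expand]
  rw [Finset.sum_add_distrib, Finset.sum_sub_distrib, ← Finset.mul_sum, ← Finset.mul_sum, hc, ← hs]
  ring

lemma convex_repr2Marginals : Convex ℝ (repr2Marginals ℓ M) := by
  rintro A ⟨α, hα0, hα1, hαsym, hαm⟩ B ⟨β, hβ0, hβ1, hβsym, hβm⟩ a b ha hb hab
  refine ⟨fun idx => a * α idx + b * β idx, ?_, ?_, ?_, ?_⟩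
  · intro idx
    have := hα0 idx; have := hβ0 idx
    positivity
  · rw [Finset.sum_add_distrib, ← Finset.mul_sum, ← Finset.mul_sum, hα1, hβ1]
    simpa using hab
  · intro σ idx
    simp only
    rw [hαsym σ idx, hβsym σ idx]
  · intro i j
    have : (a • A + b • B) i j = a * A i j + b * B i j := by
      simp [Matrix.add_apply, Matrix.smul_apply, smul_eq_mul]
    rw [this, hαm i j, hβm i j, Finset.mul_sum, Finset.mul_sum, ← Finset.sum_add_distrib]
    apply Finset.sum_congr rfl
    intro idx _
    by_cases h : idx 0 = i ∧ idx 1 = j <;> simp [h]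

/-- realize a vector of counts summing to `M+2` as the count vector of some index map -/
lemma exists_idx_of_counts (k : Fin ℓ → ℕ) (hk : ∑ i, k i = M + 2) :
    ∃ idx : Fin (M + 2) → Fin ℓ, ∀ i, cnt idx i = k i := by
  have hcard : Fintype.card (Fin (M + 2)) = Fintype.card (Σ i : Fin ℓ, Fin (k i)) := by
    rw [Fintype.card_fin, Fintype.card_sigma]
    simp [hk]
  let e : Fin (M + 2) ≃ Σ i : Fin ℓ, Fin (k i) := Fintype.equivOfCardEq hcard
  refine ⟨fun a => (e a).1, fun i => ?_⟩
  have h1 : cnt (fun a => (e a).1) i = Fintype.card {a : Fin (M + 2) // (e a).1 = i} := by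
    rw [cnt, Fintype.card_subtype]
  rw [h1]
  have h2 : Fintype.card {a : Fin (M + 2) // (e a).1 = i}
      = Fintype.card {s : Σ i' : Fin ℓ, Fin (k i') // s.1 = i} := by
    exact Fintype.card_congr (e.subtypeEquiv (fun a => Iff.rfl))
  rw [h2]
  let f : Fin (k i) → {s : Σ i' : Fin ℓ, Fin (k i') // s.1 = i} := fun x => ⟨⟨i, x⟩, rfl⟩
  have hf : Function.Bijective f := by
    constructor
    · intro x y hxy
      have h := congrArg Subtype.val hxy
      simp only [f] at h
      exact eq_of_heq (Sigma.mk.inj_iff.mp h).2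
    · rintro ⟨⟨i', x⟩, h⟩
      dsimp at h
      subst h
      exact ⟨x, rfl⟩
  rw [← Fintype.card_congr (Equiv.ofBijective f hf), Fintype.card_fin]

lemma sparse_subset : sparseExtremals ℓ M ⊆ repr2Marginals ℓ M := by
  rintro Γ ⟨lam, hnn, hsum, hnat, rfl⟩
  have hk : ∀ i, ∃ k : ℕ, lam i = (k : ℝ) / (M + 2) := hnat
  choose k hkspec using hk
  have hM2 : (M : ℝ) + 2 ≠ 0 := by positivity
  have hksum : ∑ i, k i = M + 2 := by
    have : ∑ i, ((k i : ℝ) / ((M : ℝ) + 2)) = 1 := by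
      rw [← hsum]
      apply Finset.sum_congr rfl
      intro i _
      rw [hkspec i]
    rw [← Finset.sum_div, div_eq_one_iff_eq hM2] at this
    exact_mod_cast this
  obtain ⟨idx, hidx⟩ := exists_idx_of_counts k hksum
  have hlam : lamOf idx = lam := by
    funext i
    rw [lamOf, hidx i, hkspec i]
  have := Emat_lamOf_mem (ℓ := ℓ) (M := M) idx
  rw [hlam] at this
  exact this

lemma hull_eq : repr2Marginals ℓ M = convexHull ℝ (sparseExtremals ℓ M) := by
  apply Set.Subset.antisymm
  · rintro Γ ⟨γ, hγ0, hγ1, hγsym, hγm⟩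
    have hdec : Γ = ∑ idx : Fin (M + 2) → Fin ℓ, γ idx • Emat ℓ M (lamOf idx) := by
      ext i j
      rw [decomp hγsym hγm i j, Matrix.sum_apply]
      exact Finset.sum_congr rfl (fun idx _ => by simp)
    have hmem := Finset.centerMass_mem_convexHull (Finset.univ (α := Fin (M + 2) → Fin ℓ))
      (fun idx _ => hγ0 idx) (by rw [hγ1]; norm_num)
      (fun idx (_ : idx ∈ Finset.univ) => Emat_lamOf_mem_sparse idx)
    rw [Finset.centerMass_eq_of_sum_1 _ _ hγ1] at hmem
    rw [hdec]
    exact hmem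
  · exact convexHull_min sparse_subset convex_repr2Marginals

lemma Q_facts {A : Matrix (Fin ℓ) (Fin ℓ) ℝ} (hA : A ∈ repr2Marginals ℓ M) :
    0 ≤ ((M:ℝ)+1) * (∑ i, A i i) - ((M:ℝ)+2) * (∑ i, (∑ j, A i j)^2) + 1 ∧
    (((M:ℝ)+1) * (∑ i, A i i) - ((M:ℝ)+2) * (∑ i, (∑ j, A i j)^2) + 1 = 0 →
      A = Emat ℓ M (fun i => ∑ j, A i j)) := by
  obtain ⟨α, hα0, hα1, hαsym, hαm⟩ := hA
  set μ : Fin ℓ → ℝ := fun i => ∑ j, A i j with hμdef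
  have hdec : ∀ i j, A i j = ∑ idx, α idx * Emat ℓ M (lamOf idx) i j := decomp hαsym hαm
  have hμ_eq : ∀ i, μ i = ∑ idx, α idx * lamOf idx i := by
    intro i
    calc μ i = ∑ j, A i j := rfl
      _ = ∑ j, ∑ idx, α idx * Emat ℓ M (lamOf idx) i j :=
          Finset.sum_congr rfl (fun j _ => hdec i j)
      _ = ∑ idx, ∑ j, α idx * Emat ℓ M (lamOf idx) i j := Finset.sum_comm
      _ = ∑ idx, α idx * lamOf idx i := by
          apply Finset.sum_congr rfl
          intro idx _
          rw [← Finset.mul_sum, rowsum_Emat (sum_lamOf idx)]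
  have htr : ∑ i, A i i
      = ∑ idx, α idx * ((((M:ℝ)+2) * ∑ i, (lamOf idx i)^2 - 1)/((M:ℝ)+1)) := by
    calc ∑ i, A i i = ∑ i, ∑ idx, α idx * Emat ℓ M (lamOf idx) i i :=
          Finset.sum_congr rfl (fun i _ => hdec i i)
      _ = ∑ idx, ∑ i, α idx * Emat ℓ M (lamOf idx) i i := Finset.sum_comm
      _ = _ := by
          apply Finset.sum_congr rfl
          intro idx _
          rw [← Finset.mul_sum, trace_Emat (sum_lamOf idx)]
  have hM1 : (M:ℝ)+1 ≠ 0 := by positivity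
  have j1 : ∀ i, ∑ idx, α idx * (lamOf idx i - μ i)^2
      = ∑ idx, α idx * (lamOf idx i)^2 - (μ i)^2 := by
    intro i
    have hj := jensen_single α (fun idx => lamOf idx i) hα1
    rw [← hμ_eq i] at hj
    exact hj
  have e1 : ((M:ℝ)+1) * (∑ i, A i i)
      = ((M:ℝ)+2) * (∑ idx, α idx * ∑ i, (lamOf idx i)^2) - 1 := by
    rw [htr, Finset.mul_sum]
    have hterm : ∀ idx : Fin (M + 2) → Fin ℓ,
        ((M:ℝ)+1) * (α idx * ((((M:ℝ)+2) * ∑ i, (lamOf idx i)^2 - 1)/((M:ℝ)+1)))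
        = ((M:ℝ)+2) * (α idx * ∑ i, (lamOf idx i)^2) - α idx := by
      intro idx
      field_simp
    simp_rw [hterm]
    rw [Finset.sum_sub_distrib, hα1, ← Finset.mul_sum]
  have e2 : ∑ idx, α idx * ∑ i, (lamOf idx i - μ i)^2
      = (∑ idx, α idx * ∑ i, (lamOf idx i)^2) - ∑ i, (μ i)^2 := by
    calc ∑ idx, α idx * ∑ i, (lamOf idx i - μ i)^2
        = ∑ idx, ∑ i, α idx * (lamOf idx i - μ i)^2 := by simp_rw [Finset.mul_sum]
      _ = ∑ i, ∑ idx, α idx * (lamOf idx i - μ i)^2 := Finset.sum_comm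
      _ = ∑ i, (∑ idx, α idx * (lamOf idx i)^2 - (μ i)^2) :=
          Finset.sum_congr rfl (fun i _ => j1 i)
      _ = (∑ i, ∑ idx, α idx * (lamOf idx i)^2) - ∑ i, (μ i)^2 := Finset.sum_sub_distrib _ _
      _ = (∑ idx, ∑ i, α idx * (lamOf idx i)^2) - ∑ i, (μ i)^2 := by rw [Finset.sum_comm]
      _ = (∑ idx, α idx * ∑ i, (lamOf idx i)^2) - ∑ i, (μ i)^2 := by simp_rw [← Finset.mul_sum]
  have hkey : ((M:ℝ)+1) * (∑ i, A i i) - ((M:ℝ)+2) * (∑ i, (μ i)^2) + 1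
      = ((M:ℝ)+2) * ∑ idx, α idx * ∑ i, (lamOf idx i - μ i)^2 := by
    rw [e1, e2]
    ring
  have hnn : 0 ≤ ((M:ℝ)+2) * ∑ idx, α idx * ∑ i, (lamOf idx i - μ i)^2 := by
    apply mul_nonneg (by positivity)
    apply Finset.sum_nonneg
    intro idx _
    apply mul_nonneg (hα0 idx)
    apply Finset.sum_nonneg
    intro i _
    positivity
  constructor
  · rw [hkey]; exact hnn
  · intro h0
    rw [hkey] at h0
    have hsum0 : ∑ idx, α idx * ∑ i, (lamOf idx i - μ i)^2 = 0 := by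
      have hM2 : (M:ℝ)+2 ≠ 0 := by positivity
      exact (mul_eq_zero.mp h0).resolve_left hM2
    have hterm0 : ∀ idx : Fin (M + 2) → Fin ℓ,
        α idx * ∑ i, (lamOf idx i - μ i)^2 = 0 := by
      have := (Finset.sum_eq_zero_iff_of_nonneg (fun idx _ => by
        apply mul_nonneg (hα0 idx)
        apply Finset.sum_nonneg
        intro i _
        positivity)).mp hsum0
      exact fun idx => this idx (Finset.mem_univ idx)
    ext i j
    rw [hdec i j]
    have hEq : ∀ idx : Fin (M + 2) → Fin ℓ,
        α idx * Emat ℓ M (lamOf idx) i j = α idx * Emat ℓ M μ i j := by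
      intro idx
      rcases mul_eq_zero.mp (hterm0 idx) with hz | hz
      · rw [hz, zero_mul, zero_mul]
      · have hlam : lamOf idx = μ := by
          funext l
          have := (Finset.sum_eq_zero_iff_of_nonneg (fun l _ => by positivity)).mp hz l
            (Finset.mem_univ l)
          have := pow_eq_zero_iff (n := 2) (by norm_num) |>.mp this
          linarith [this]
        rw [hlam]
    simp_rw [hEq]
    rw [← Finset.sum_mul, hα1, one_mul]


/-- **Characterization of the extreme points of the discrete `N`-representable
2-marginals:** the extreme points of `ℛ₂` are exactly the matrices
`(N/(N−1))λλᵀ − (1/(N−1))diag(λ)` with `λ ≥ 0`, `𝟙ᵀλ = 1`, `λ_i ∈ {0,1/N,2/N,…}`;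
in particular `ℛ₂` is the convex hull of these matrices. -/
theorem extreme_points_of_repr2Marginals (ℓ M : ℕ) :
    Set.extremePoints ℝ (repr2Marginals ℓ M) = sparseExtremals ℓ M ∧
    repr2Marginals ℓ M = convexHull ℝ (sparseExtremals ℓ M) := by
  refine ⟨?_, hull_eq⟩
  apply Set.Subset.antisymm
  · rw [hull_eq]
    exact extremePoints_convexHull_subset
  · rintro Γ hΓs
    obtain ⟨lam, hnn, hsum, hnat, hΓeq⟩ := hΓs
    have hΓE : Γ = Emat ℓ M lam := hΓeq
    rw [mem_extremePoints]
    refine ⟨sparse_subset ⟨lam, hnn, hsum, hnat, hΓeq⟩, ?_⟩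
    rintro A hA B hB ⟨a, b, ha, hb, hab, habΓ⟩
    have hEnt : ∀ i j, a * A i j + b * B i j = Γ i j := by
      intro i j
      rw [← habΓ]
      simp
    set μA : Fin ℓ → ℝ := fun i => ∑ j, A i j with hμA
    set μB : Fin ℓ → ℝ := fun i => ∑ j, B i j with hμB
    have hM1 : (M:ℝ)+1 ≠ 0 := by positivity
    -- row sums
    have hrow : ∀ i, a * μA i + b * μB i = lam i := by
      intro i
      have : ∑ j, (a * A i j + b * B i j) = ∑ j, Γ i j :=
        Finset.sum_congr rfl (fun j _ => hEnt i j)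
      rw [Finset.sum_add_distrib, ← Finset.mul_sum, ← Finset.mul_sum] at this
      rw [hμA, hμB]
      simp only
      rw [this, hΓE, rowsum_Emat hsum]
    -- traces
    have htrace : a * (∑ i, A i i) + b * (∑ i, B i i)
        = (((M:ℝ)+2) * ∑ i, (lam i)^2 - 1) / ((M:ℝ)+1) := by
      have : ∑ i, (a * A i i + b * B i i) = ∑ i, Γ i i :=
        Finset.sum_congr rfl (fun i _ => hEnt i i)
      rw [Finset.sum_add_distrib, ← Finset.mul_sum, ← Finset.mul_sum] at this
      rw [this, hΓE, trace_Emat hsum]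
    -- quantity Q for A, B
    obtain ⟨hQA_nn, hQA_eq⟩ := Q_facts hA
    obtain ⟨hQB_nn, hQB_eq⟩ := Q_facts hB
    set QA := ((M:ℝ)+1) * (∑ i, A i i) - ((M:ℝ)+2) * (∑ i, (μA i)^2) + 1 with hQAdef
    set QB := ((M:ℝ)+1) * (∑ i, B i i) - ((M:ℝ)+2) * (∑ i, (μB i)^2) + 1 with hQBdef
    -- pointwise convexity identity for squares
    have hb' : b = 1 - a := by linarith
    have hsq : ∑ i, (lam i)^2
        = a * (∑ i, (μA i)^2) + b * (∑ i, (μB i)^2) - a * b * ∑ i, (μA i - μB i)^2 := by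
      have hpt : ∀ i, (lam i)^2
          = a * (μA i)^2 + b * (μB i)^2 - a * b * (μA i - μB i)^2 := by
        intro i
        rw [← hrow i, hb']
        ring
      calc ∑ i, (lam i)^2
          = ∑ i, (a * (μA i)^2 + b * (μB i)^2 - a * b * (μA i - μB i)^2) :=
            Finset.sum_congr rfl (fun i _ => hpt i)
        _ = _ := by
            rw [Finset.sum_sub_distrib, Finset.sum_add_distrib, ← Finset.mul_sum,
              ← Finset.mul_sum, ← Finset.mul_sum]
    -- the key balance equation
    have hbal : a * QA + b * QB + ((M:ℝ)+2) * (a * b) * ∑ i, (μA i - μB i)^2 = 0 := by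
      have h1 : ((M:ℝ)+1) * (a * (∑ i, A i i) + b * (∑ i, B i i))
          = ((M:ℝ)+2) * ∑ i, (lam i)^2 - 1 := by
        rw [htrace]
        field_simp
      rw [hQAdef, hQBdef]
      rw [hsq] at h1
      nlinarith [h1]
    have hsq_nn : 0 ≤ ∑ i, (μA i - μB i)^2 := Finset.sum_nonneg (fun i _ => by positivity)
    have hab_pos : 0 < a * b := mul_pos ha hb
    have hterm_nn : 0 ≤ ((M:ℝ)+2) * (a * b) * ∑ i, (μA i - μB i)^2 := by positivity
    have haQA : 0 ≤ a * QA := mul_nonneg ha.le hQA_nn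
    have hbQB : 0 ≤ b * QB := mul_nonneg hb.le hQB_nn
    have hQA0 : QA = 0 := by
      have : a * QA = 0 := by linarith
      exact (mul_eq_zero.mp this).resolve_left (ne_of_gt ha)
    have hQB0 : QB = 0 := by
      have : b * QB = 0 := by linarith
      exact (mul_eq_zero.mp this).resolve_left (ne_of_gt hb)
    have hμeq : μA = μB := by
      have hz : ∑ i, (μA i - μB i)^2 = 0 := by
        have : ((M:ℝ)+2) * (a * b) * ∑ i, (μA i - μB i)^2 = 0 := by linarith
        have h2 : ((M:ℝ)+2) * (a * b) ≠ 0 := by positivity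
        exact (mul_eq_zero.mp this).resolve_left h2
      funext i
      have := (Finset.sum_eq_zero_iff_of_nonneg (fun i _ => by positivity)).mp hz i
        (Finset.mem_univ i)
      have := pow_eq_zero_iff (n := 2) (by norm_num) |>.mp this
      linarith
    have hAE : A = Emat ℓ M μA := hQA_eq hQA0
    have hBE : B = Emat ℓ M μB := hQB_eq hQB0
    have hAB : A = B := by rw [hAE, hBE, hμeq]
    have hAΓ : A = Γ := by
      ext i j
      have := hEnt i j
      rw [← hAB] at this
      have : (a + b) * A i j = Γ i j := by rw [add_mul]; linarith [this]
      rw [hab, one_mul] at this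
      exact this
    exact ⟨hAΓ, hAB ▸ hAΓ⟩
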